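/- Let W = W(Γ) be the right-angled Coxeter group of a simple graph Γ with word length ℓ. Let w₁, w₂, w₃, u ∈ W be such that w₂ is a clique word, ℓ(w₁·w₂·w₃) = ℓ(w₁) + ℓ(w₂) + ℓ(w₃), ℓ(w₁·w₂·u) = ℓ(w₁) + ℓ(w₂) + ℓ(u), and ℓ(w₃⁻¹·w₂·u) = ℓ(w₃) + ℓ(w₂) + ℓ(u). If a generator s_v is a right descent of both w₁·w₂·u and w₃⁻¹·w₂·u, then s_v is a right descent of w₂·u. -/

import Mathlib

namespace RACG

variable {V : Type*} [DecidableEq V]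

/-- The right-angled Coxeter matrix of a simple graph `G`: diagonal entries are `1`,
entries at adjacent pairs are `2` (the generators commute), and entries at distinct
non-adjacent pairs are `0` (representing `∞`, i.e. no relation). -/
def racgMatrix (G : SimpleGraph V) [DecidableRel G.Adj] : CoxeterMatrix V where
  M a b := if a = b then 1 else if G.Adj a b then 2 else 0
  isSymm := by
    refine Matrix.ext fun a b => ?_
    change (if b = a then 1 else if G.Adj b a then 2 else 0) = (if a = b then 1 else if G.Adj a b then 2 else 0)
    by_cases h : a = b
    · subst h; rfl
    · rw [if_neg h, if_neg (Ne.symm h)]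
      by_cases hadj : G.Adj a b
      · rw [if_pos hadj, if_pos hadj.symm]
      · rw [if_neg hadj, if_neg (fun h' => hadj h'.symm)]
  diagonal := fun i => by simp
  off_diagonal := fun i i' h => by
    beta_reduce
    rw [if_neg h]
    by_cases hadj : G.Adj i i' <;> simp [hadj]

variable {G : SimpleGraph V} [DecidableRel G.Adj] {W : Type*} [Group W]

/-- In the right-angled Coxeter group of `G`, the simple reflections at adjacent
vertices commute. -/
theorem simple_commute_of_adj (cs : CoxeterSystem (racgMatrix G) W) {a b : V}
    (h : G.Adj a b) : Commute (cs.simple a) (cs.simple b) := by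
  have hM : (racgMatrix G) a b = 2 := by
    simp only [racgMatrix, if_neg h.ne, if_pos h]
  have h2 := cs.simple_mul_simple_pow a b
  rw [hM, pow_two] at h2
  have h3 := mul_eq_one_iff_eq_inv.mp h2
  rwa [mul_inv_rev, cs.inv_simple, cs.inv_simple] at h3

/-- The clique word associated to a finite set `C` of pairwise adjacent vertices:
the product of the simple reflections at the vertices of `C` (in any order; these
commute). If `C` is not a clique, we set the value to `1` by convention. -/
noncomputable def cliqueWord (cs : CoxeterSystem (racgMatrix G) W) (C : Finset V) : W :=
  if h : (C : Set V).Pairwise G.Adj then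
    C.noncommProd (fun v => cs.simple v)
      (fun _ ha _ hb hab => simple_commute_of_adj cs (h ha hb hab))
  else 1

/-- `w` is a clique word if it is the product of the simple reflections over a finite
set of pairwise adjacent vertices. -/
def IsCliqueWord (cs : CoxeterSystem (racgMatrix G) W) (w : W) : Prop :=
  ∃ C : Finset V, (C : Set V).Pairwise G.Adj ∧ w = cliqueWord cs C

end RACG

set_option linter.unusedSectionVars false

namespace RACGAux

variable {V : Type*} [DecidableEq V] (G : SimpleGraph V) [DecidableRel G.Adj]


variable {V : Type*} [DecidableEq V] (G : SimpleGraph V) [DecidableRel G.Adj]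

/-- entries of the RACG bilinear form -/
def kap (a b : V) : ℤ := if a = b then 1 else if G.Adj a b then 0 else -1

theorem kap_symm (a b : V) : kap G a b = kap G b a := by
  unfold kap
  by_cases h : a = b
  · subst h; rfl
  · rw [if_neg h, if_neg (Ne.symm h)]
    by_cases hadj : G.Adj a b
    · rw [if_pos hadj, if_pos hadj.symm]
    · rw [if_neg hadj, if_neg fun h' => hadj h'.symm]

@[simp] theorem kap_self (a : V) : kap G a a = 1 := by simp [kap]

theorem kap_adj {a b : V} (h : G.Adj a b) : kap G a b = 0 := by
  simp [kap, h, h.ne]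

theorem kap_nonpos {a b : V} (h : a ≠ b) : kap G a b ≤ 0 := by
  unfold kap
  rw [if_neg h]
  by_cases hadj : G.Adj a b <;> simp [hadj]

/-- the bilinear form -/
noncomputable def formL : (V →₀ ℤ) →ₗ[ℤ] (V →₀ ℤ) →ₗ[ℤ] ℤ :=
  Finsupp.lsum ℤ fun a => LinearMap.toSpanSingleton ℤ _
    (Finsupp.lsum ℤ fun b => LinearMap.toSpanSingleton ℤ ℤ (kap G a b))

/-- simple root -/
noncomputable def al (i : V) : V →₀ ℤ := Finsupp.single i 1

theorem formL_single_single (a b : V) (c d : ℤ) :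
    formL G (Finsupp.single a c) (Finsupp.single b d) = c * (d * kap G a b) := by
  simp [formL, LinearMap.toSpanSingleton_apply, smul_eq_mul]
  try ring

theorem formL_al_al (a b : V) : formL G (al a) (al b) = kap G a b := by
  simp [al, formL_single_single]

theorem formL_symm (x y : V →₀ ℤ) : formL G x y = formL G y x := by
  have : formL G = (formL G).flip := by
    apply Finsupp.lhom_ext
    intro a c
    apply Finsupp.lhom_ext
    intro b d
    simp only [LinearMap.flip_apply, formL_single_single]
    rw [kap_symm]
    ring
  conv_lhs => rw [this]
  rfl

/-- the reflection associated to vertex `i` -/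
noncomputable def sig (i : V) : Module.End ℤ (V →₀ ℤ) :=
  LinearMap.id - LinearMap.smulRight ((2 : ℤ) • formL G (al i)) (al i)

theorem sig_apply (i : V) (x : V →₀ ℤ) :
    sig G i x = x - (2 * formL G (al i) x) • al i := by
  simp [sig, LinearMap.smulRight_apply, smul_eq_mul, LinearMap.sub_apply]

theorem sig_al_self (i : V) : sig G i (al i) = -al i := by
  rw [sig_apply, formL_al_al, kap_self]
  module

theorem sig_al_adj {i j : V} (h : G.Adj i j) : sig G i (al j) = al j := by
  rw [sig_apply, formL_al_al, kap_adj G h]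
  module

theorem formL_sig_sig (i : V) (x y : V →₀ ℤ) :
    formL G (sig G i x) (sig G i y) = formL G x y := by
  rw [sig_apply, sig_apply]
  simp only [map_sub, map_smul, LinearMap.sub_apply, LinearMap.smul_apply, smul_eq_mul]
  rw [formL_al_al, kap_self, formL_symm G x (al i)]
  ring

theorem sig_sig (i : V) (x : V →₀ ℤ) : sig G i (sig G i x) = x := by
  rw [sig_apply, sig_apply]
  simp only [map_sub, map_smul, smul_eq_mul, formL_al_al, kap_self]
  module

theorem sig_comm {i j : V} (h : G.Adj i j) (x : V →₀ ℤ) :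
    sig G i (sig G j x) = sig G j (sig G i x) := by
  rw [sig_apply G j x, sig_apply G i x]
  simp only [map_sub, map_smul, sig_apply, smul_eq_mul]
  rw [formL_al_al, formL_al_al, kap_adj G h, kap_adj G h.symm]
  simp only [mul_zero, zero_mul, zero_smul, sub_zero]
  module
section Rho

variable {W : Type*} [Group W] (cs : CoxeterSystem (RACG.racgMatrix G) W)


theorem liftable : (RACG.racgMatrix G).IsLiftable (fun i => sig G i) := by
  intro i j
  by_cases hij : i = j
  · subst hij
    have hM : (RACG.racgMatrix G) i i = 1 := by simp [RACG.racgMatrix]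
    rw [hM, pow_one]
    exact LinearMap.ext fun x => by
      simpa only [Module.End.mul_apply, Module.End.one_apply] using sig_sig G i x
  · by_cases hadj : G.Adj i j
    · have hM : (RACG.racgMatrix G) i j = 2 := by
        simp [RACG.racgMatrix, hij, hadj]
      rw [hM]
      exact LinearMap.ext fun x => by
        simp only [pow_two, Module.End.mul_apply, Module.End.one_apply]
        rw [sig_comm G hadj (sig G i ((sig G j) x)), sig_sig, sig_sig]
    · have hM : (RACG.racgMatrix G) i j = 0 := by
        simp [RACG.racgMatrix, hij, hadj]
      rw [hM, pow_zero]

/-- The reflection representation of the RACG. -/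
noncomputable def rho : W →* Module.End ℤ (V →₀ ℤ) :=
  cs.lift ⟨fun i => sig G i, liftable G⟩

theorem rho_simple (i : V) : rho G cs (cs.simple i) = sig G i :=
  cs.lift_apply_simple (liftable G) i

theorem rho_mul_apply (a b : W) (x : V →₀ ℤ) :
    rho G cs (a * b) x = rho G cs a (rho G cs b x) := by
  rw [map_mul]; rfl

theorem rho_simple_apply (w : W) (i : V) (x : V →₀ ℤ) :
    rho G cs (w * cs.simple i) x = rho G cs w (sig G i x) := by
  rw [rho_mul_apply, rho_simple]

theorem form_inv (w : W) : ∀ x y : V →₀ ℤ,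
    formL G (rho G cs w x) (rho G cs w y) = formL G x y := by
  induction w using cs.simple_induction with
  | simple i => intro x y; rw [rho_simple]; exact formL_sig_sig G i x y
  | one => intro x y; simp
  | mul w w' hw hw' => intro x y; rw [rho_mul_apply, rho_mul_apply, hw, hw']



/-! ### Positivity -/

def IsPos (x : V →₀ ℤ) : Prop := (∀ b, 0 ≤ x b) ∧ ∃ b, 0 < x b

theorem pos_al (i : V) : IsPos (al (V := V) i) := by
  constructor
  · intro b
    simp only [al, Finsupp.single_apply]
    split <;> omega
  · exact ⟨i, by simp [al]⟩

theorem pos_neg_false {x : V →₀ ℤ} (h : IsPos x) (h' : IsPos (-x)) : False := by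
  obtain ⟨b, hb⟩ := h'.2
  have := h.1 b
  simp only [Finsupp.coe_neg, Pi.neg_apply] at hb
  omega

theorem pos_add_nonneg_smul {x y : V →₀ ℤ} {K : ℤ} (hx : IsPos x) (hy : IsPos y)
    (hK : 0 ≤ K) : IsPos (x + K • y) := by
  constructor
  · intro b
    have h1 := hx.1 b
    have h2 := hy.1 b
    simp only [Finsupp.add_apply, Finsupp.smul_apply, smul_eq_mul]
    nlinarith
  · obtain ⟨b, hb⟩ := hx.2
    refine ⟨b, ?_⟩
    have h2 := hy.1 b
    simp only [Finsupp.add_apply, Finsupp.smul_apply, smul_eq_mul]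
    nlinarith

theorem pos_smul_add_smul {x y : V →₀ ℤ} {A B : ℤ} (hx : IsPos x) (hy : IsPos y)
    (hA : 1 ≤ A) (hB : 0 ≤ B) : IsPos (A • x + B • y) := by
  constructor
  · intro b
    have h1 := hx.1 b
    have h2 := hy.1 b
    simp only [Finsupp.add_apply, Finsupp.smul_apply, smul_eq_mul]
    nlinarith
  · obtain ⟨b, hb⟩ := hx.2
    refine ⟨b, ?_⟩
    have h2 := hy.1 b
    simp only [Finsupp.add_apply, Finsupp.smul_apply, smul_eq_mul]
    nlinarith

theorem kap_nonadj {a b : V} (hne : a ≠ b) (h : ¬G.Adj a b) : kap G a b = -1 := by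
  simp [kap, hne, h]

theorem sig_al_nonadj {i j : V} (hne : j ≠ i) (h : ¬G.Adj j i) :
    sig G j (al i) = al i + (2:ℤ) • al j := by
  rw [sig_apply, formL_al_al, kap_nonadj G hne h]
  module

/-! ### The walk lemma -/

theorem walk (n : ℕ) : ∀ (w : W), cs.length w = n → ∀ (i j : V), i ≠ j → ¬G.Adj i j →
    cs.length (w * cs.simple j) < cs.length w → cs.length w < cs.length (w * cs.simple i) →
    ∃ (v : W) (y : V) (t : List V) (A B C D : ℤ),
      w = v * cs.wordProd (y :: t) ∧ cs.length w = cs.length v + (y :: t).length ∧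
      (y = i ∨ y = j) ∧
      cs.length v < cs.length (v * cs.simple i) ∧ cs.length v < cs.length (v * cs.simple j) ∧
      rho G cs w (al i) = A • rho G cs v (al i) + B • rho G cs v (al j) ∧
      rho G cs w (al j) = -(C • rho G cs v (al i) + D • rho G cs v (al j)) ∧
      A = C + 1 ∧ B = D + 1 ∧ 0 ≤ C ∧ 0 ≤ D ∧
      (y = i → A = B + 1) ∧ (y = j → B = A + 1) := by
  induction n using Nat.strong_induction_on with
  | _ n IH =>
  intro w hn i j hij hadj hdown hup
  subst hn
  have hlen0 : cs.length (w * cs.simple j) + 1 = cs.length w := by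
    rcases cs.length_mul_simple w j with h | h
    · omega
    · exact h
  set w' := w * cs.simple j with hw'
  have hww : w' * cs.simple j = w := cs.simple_mul_simple_cancel_right j
  have hlen : cs.length w' + 1 = cs.length w := hlen0
  have hsig : ∀ x, rho G cs w x = rho G cs w' (sig G j x) := fun x => by
    rw [← hww, rho_simple_apply]
  have hFi : rho G cs w (al i) = rho G cs w' (al i) + (2:ℤ) • rho G cs w' (al j) := by
    rw [hsig, sig_al_nonadj G (Ne.symm hij) (fun h => hadj h.symm), map_add, map_smul]
  have hFj : rho G cs w (al j) = -(rho G cs w' (al j)) := by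
    rw [hsig, sig_al_self, map_neg]
  by_cases h1 : cs.length w' < cs.length (w' * cs.simple i)
  · refine ⟨w', j, [], 1, 2, 0, 1, ?_, ?_, Or.inr rfl, h1, ?_, ?_, ?_, by omega, by omega,
      le_refl 0, by omega, fun h => absurd h.symm hij, fun _ => by omega⟩
    · rw [cs.wordProd_singleton, hww]
    · simp only [List.length_singleton]; omega
    · rw [hww]; omega
    · rw [hFi]; module
    · rw [hFj]; module
  · have h1' : cs.length (w' * cs.simple i) < cs.length w' :=
      lt_of_le_of_ne (not_lt.mp h1) (cs.length_mul_simple_ne w' i)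
    have hup' : cs.length w' < cs.length (w' * cs.simple j) := by rw [hww]; omega
    obtain ⟨v, y, t', A', B', C', D', hvw, hvlen, hy, hvj2, hvi2, hFj', hFi', hA', hB', hC',
        hD', hyj', hyi'⟩ :=
      IH (cs.length w') (by omega) w' rfl j i (Ne.symm hij) (fun h => hadj h.symm) h1' hup'
    refine ⟨v, y, t' ++ [j], 2*B' - D', 2*A' - C', B', A', ?_, ?_, ?_, hvi2, hvj2, ?_, ?_,
      by omega, by omega, by omega, by omega, ?_, ?_⟩
    · rw [← hww, hvw]
      rw [show (y :: (t' ++ [j])) = (y :: t') ++ [j] by simp]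
      rw [cs.wordProd_append, cs.wordProd_singleton, mul_assoc]
    · simp only [List.length_cons, List.length_append, List.length_singleton, List.length_nil] at hvlen ⊢
      omega
    · tauto
    · rw [hFi, hFi', hFj']; module
    · rw [hFj, hFj']; module
    · intro h
      have := hyi' h
      omega
    · intro h
      have := hyj' h
      omega

/-! ### The positivity theorem -/

theorem mainPos (n : ℕ) : ∀ (w : W), cs.length w = n → ∀ i : V, cs.length w < cs.length (w * cs.simple i) →
    IsPos (rho G cs w (al i)) := by
  induction n using Nat.strong_induction_on with
  | _ n IH =>
  intro w hn i hup
  subst hn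
  by_cases hw1 : w = 1
  · subst hw1
    rw [map_one]
    exact pos_al i
  · obtain ⟨j, hj⟩ := cs.exists_rightDescent_of_ne_one hw1
    have hdown : cs.length (w * cs.simple j) < cs.length w := hj
    have hij : i ≠ j := by
      rintro rfl
      omega
    have hlen0 : cs.length (w * cs.simple j) + 1 = cs.length w := by
      rcases cs.length_mul_simple w j with h | h
      · omega
      · exact h
    set w' := w * cs.simple j with hw'
    have hww : w' * cs.simple j = w := cs.simple_mul_simple_cancel_right j
    have hlen : cs.length w' + 1 = cs.length w := hlen0
    have hsig : ∀ x, rho G cs w x = rho G cs w' (sig G j x) := fun x => by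
      rw [← hww, rho_simple_apply]
    by_cases h1 : cs.length w' < cs.length (w' * cs.simple i)
    · -- easy case: both up at w'
      have hup' : cs.length w' < cs.length (w' * cs.simple j) := by rw [hww]; omega
      have p1 : IsPos (rho G cs w' (al i)) := IH (cs.length w') (by omega) w' rfl i h1
      have p2 : IsPos (rho G cs w' (al j)) := IH (cs.length w') (by omega) w' rfl j hup'
      have : rho G cs w (al i)
          = rho G cs w' (al i) + (-(2 * kap G j i)) • rho G cs w' (al j) := by
        rw [hsig, sig_apply, formL_al_al, map_sub, map_smul]
        module
      rw [this]
      exact pos_add_nonneg_smul p1 p2 (by have := kap_nonpos G (Ne.symm hij); omega)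
    · -- walk case
      have h1' : cs.length (w' * cs.simple i) < cs.length w' :=
        lt_of_le_of_ne (not_lt.mp h1) (cs.length_mul_simple_ne w' i)
      have hadj : ¬G.Adj i j := by
        intro hadj
        have hcomm : cs.simple j * cs.simple i = cs.simple i * cs.simple j :=
          (RACG.simple_commute_of_adj cs hadj.symm).eq
        have key : w' * cs.simple i * cs.simple j = w * cs.simple i := by
          rw [hw', mul_assoc w (cs.simple j) (cs.simple i), hcomm,
            ← mul_assoc w (cs.simple i) (cs.simple j)]
          exact cs.simple_mul_simple_cancel_right j
        have hle : cs.length (w * cs.simple i) ≤ cs.length (w' * cs.simple i) + 1 := by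
          rw [← key]
          have := cs.length_mul_le (w' * cs.simple i) (cs.simple j)
          simpa [cs.length_simple] using this
        omega
      obtain ⟨v, y, t, A, B, C, D, hvw, hvlen, hy, hvi, hvj, hFi, hFj, hA, hB, hC, hD, _, _⟩ :=
        walk G cs (cs.length w) w rfl i j hij hadj hdown hup
      have hlv : cs.length v < cs.length w := by
        simp only [List.length_cons] at hvlen
        omega
      have p1 : IsPos (rho G cs v (al i)) := IH (cs.length v) hlv v rfl i hvi
      have p2 : IsPos (rho G cs v (al j)) := IH (cs.length v) hlv v rfl j hvj
      rw [hFi]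
      exact pos_smul_add_smul p1 p2 (by omega) (by omega)

theorem mainNeg (w : W) (i : V) (h : cs.length (w * cs.simple i) < cs.length w) :
    IsPos (-(rho G cs w (al i))) := by
  have h2 : cs.length (w * cs.simple i) < cs.length (w * cs.simple i * cs.simple i) := by
    rw [cs.simple_mul_simple_cancel_right]
    exact h
  have := mainPos G cs (cs.length (w * cs.simple i)) _ rfl i h2
  rwa [rho_simple_apply, sig_al_self, map_neg] at this

theorem pos_iff (w : W) (i : V) : cs.length w < cs.length (w * cs.simple i) ↔ IsPos (rho G cs w (al i)) := by
  constructor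
  · exact mainPos G cs (cs.length w) w rfl i
  · intro h
    by_contra hn
    have : cs.length (w * cs.simple i) < cs.length w :=
      lt_of_le_of_ne (not_lt.mp hn) (cs.length_mul_simple_ne w i)
    exact pos_neg_false h (mainNeg G cs w i this)

theorem neg_iff (w : W) (i : V) : cs.length (w * cs.simple i) < cs.length w ↔ IsPos (-(rho G cs w (al i))) := by
  constructor
  · exact mainNeg G cs w i
  · intro h
    by_contra hn
    have : cs.length w < cs.length (w * cs.simple i) :=
      lt_of_le_of_ne (not_lt.mp hn) (Ne.symm (cs.length_mul_simple_ne w i))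
    exact pos_neg_false (mainPos G cs (cs.length w) w rfl i this) h

/-! ### Roots -/

def IsRoot (x : V →₀ ℤ) : Prop := ∃ (g : W) (a : V), x = rho G cs g (al a)

theorem root_dichotomy {x : V →₀ ℤ} (h : IsRoot G cs x) : IsPos x ∨ IsPos (-x) := by
  obtain ⟨g, a, rfl⟩ := h
  rcases Nat.lt_or_gt_of_ne (cs.length_mul_simple_ne g a) with hlt | hgt
  · right; exact mainNeg G cs g a hlt
  · left; exact mainPos G cs _ g rfl a hgt

theorem root_rho {x : V →₀ ℤ} (w : W) (h : IsRoot G cs x) : IsRoot G cs (rho G cs w x) := by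
  obtain ⟨g, a, rfl⟩ := h
  exact ⟨w * g, a, (rho_mul_apply G cs w g (al a)).symm⟩

theorem root_norm {x : V →₀ ℤ} (h : IsRoot G cs x) : formL G x x = 1 := by
  obtain ⟨g, a, rfl⟩ := h
  rw [form_inv, formL_al_al, kap_self]

theorem pos_flip {x : V →₀ ℤ} {i : V} (hp : IsPos x) (hr : IsRoot G cs x)
    (hn : IsPos (-(sig G i x))) : x = al i := by
  have hcoord : ∀ b, b ≠ i → x b = 0 := by
    intro b hb
    have h1 := hp.1 b
    have h2 := hn.1 b
    rw [sig_apply] at h2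
    simp only [Finsupp.coe_neg, Pi.neg_apply, Finsupp.sub_apply, Finsupp.smul_apply,
      smul_eq_mul, al, Finsupp.single_apply, if_neg (fun h : i = b => hb h.symm),
      mul_zero, sub_zero] at h2
    omega
  have hsingle : x = Finsupp.single i (x i) := by
    ext b
    by_cases hb : b = i
    · subst hb; simp
    · rw [hcoord b hb, Finsupp.single_apply, if_neg (fun h : i = b => hb h.symm)]
  have hnorm := root_norm G cs hr
  rw [hsingle, formL_single_single, kap_self, mul_one] at hnorm
  have hge : 0 ≤ x i := hp.1 i
  have : x i = 1 := by nlinarith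
  rw [hsingle, this]
  rfl

theorem rho_conj_apply (h : W) (a : V) (y : V →₀ ℤ) :
    rho G cs (h * cs.simple a * h⁻¹) y
      = y - (2 * formL G (rho G cs h (al a)) y) • rho G cs h (al a) := by
  have hform : formL G (al a) (rho G cs h⁻¹ y) = formL G (rho G cs h (al a)) y := by
    conv_rhs => rw [show y = rho G cs h (rho G cs h⁻¹ y) by
      rw [← rho_mul_apply, mul_inv_cancel, map_one]; rfl]
    rw [form_inv]
  rw [rho_mul_apply, rho_mul_apply, rho_simple, sig_apply, hform, map_sub, map_smul,
    ← rho_mul_apply, mul_inv_cancel, map_one]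
  rfl

theorem faithful {w : W} (h : rho G cs w = 1) : w = 1 := by
  by_contra hw
  obtain ⟨j, hj⟩ := cs.exists_rightDescent_of_ne_one hw
  have hneg : IsPos (-(rho G cs w (al j))) := mainNeg G cs w j hj
  rw [h] at hneg
  exact pos_neg_false (pos_al j) hneg

theorem refl_eq {h : W} {a i : V} (hroot : rho G cs h (al a) = al i) :
    h * cs.simple a * h⁻¹ = cs.simple i := by
  have hmap : rho G cs (h * cs.simple a * h⁻¹) = rho G cs (cs.simple i) := by
    apply LinearMap.ext
    intro y
    rw [rho_conj_apply, hroot, rho_simple, sig_apply]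
  have hone : rho G cs ((h * cs.simple a * h⁻¹) * cs.simple i) = 1 := by
    rw [map_mul, hmap, ← map_mul, cs.simple_mul_simple_self, map_one]
  have := faithful G cs hone
  calc h * cs.simple a * h⁻¹ = (h * cs.simple a * h⁻¹) * cs.simple i * cs.simple i := by
        rw [cs.simple_mul_simple_cancel_right]
    _ = cs.simple i := by rw [this, one_mul]

theorem scan : ∀ (ω : List V) (g : W) (a : V), IsPos (rho G cs g (al a)) →
    IsPos (-(rho G cs (cs.wordProd ω * g) (al a))) →
    ∃ (ω₁ : List V) (i : V) (ω₂ : List V), ω = ω₁ ++ i :: ω₂ ∧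
      rho G cs (cs.wordProd ω₂ * g) (al a) = al i := by
  intro ω
  induction ω with
  | nil =>
      intro g a hp hn
      rw [cs.wordProd_nil, one_mul] at hn
      exact absurd hn (fun h => pos_neg_false hp h)
  | cons i₀ ω' ih =>
      intro g a hp hn
      have hsplit : rho G cs (cs.wordProd (i₀ :: ω') * g) (al a)
          = sig G i₀ (rho G cs (cs.wordProd ω' * g) (al a)) := by
        rw [cs.wordProd_cons, mul_assoc, rho_mul_apply, rho_simple]
      rcases root_dichotomy G cs (⟨cs.wordProd ω' * g, a, rfl⟩ :
          IsRoot G cs (rho G cs (cs.wordProd ω' * g) (al a))) with hpos | hneg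
      · have hn' : IsPos (-(sig G i₀ (rho G cs (cs.wordProd ω' * g) (al a)))) := by
          rw [← hsplit]; exact hn
        have heq := pos_flip G cs hpos ⟨cs.wordProd ω' * g, a, rfl⟩ hn'
        exact ⟨[], i₀, ω', rfl, heq⟩
      · obtain ⟨ω₁, i, ω₂, h1, h2⟩ := ih g a hp hneg
        exact ⟨i₀ :: ω₁, i, ω₂, by rw [h1]; rfl, h2⟩

theorem conj_sq (g : W) (a : V) : (g * cs.simple a * g⁻¹) * (g * cs.simple a * g⁻¹) = 1 := by
  have : (g * cs.simple a * g⁻¹) * (g * cs.simple a * g⁻¹)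
      = g * (cs.simple a * cs.simple a) * g⁻¹ := by group
  rw [this, cs.simple_mul_simple_self, mul_one, mul_inv_cancel]

theorem crit (w g : W) (a : V) (hp : IsPos (rho G cs g (al a)))
    (hn : IsPos (-(rho G cs (w * g) (al a)))) :
    cs.length (w * (g * cs.simple a * g⁻¹)) < cs.length w := by
  obtain ⟨ω, hlenω, hw⟩ := cs.exists_reduced_word w
  have hn' : IsPos (-(rho G cs (cs.wordProd ω * g) (al a))) := by rw [← hw]; exact hn
  obtain ⟨ω₁, i, ω₂, hsplit, hroot⟩ := scan G cs ω g a hp hn'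
  have hrefl : (cs.wordProd ω₂ * g) * cs.simple a * (cs.wordProd ω₂ * g)⁻¹ = cs.simple i :=
    refl_eq G cs hroot
  have h2 : cs.simple i * cs.wordProd ω₂ = cs.wordProd ω₂ * (g * cs.simple a * g⁻¹) := by
    rw [← hrefl]; group
  have halg : w * (g * cs.simple a * g⁻¹) = cs.wordProd (ω₁ ++ ω₂) := by
    rw [hw, hsplit, cs.wordProd_append, cs.wordProd_cons, cs.wordProd_append,
      mul_assoc (cs.wordProd ω₁)]
    congr 1
    rw [h2, mul_assoc, conj_sq G cs g a, mul_one]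
  have hle : cs.length (w * (g * cs.simple a * g⁻¹)) ≤ (ω₁ ++ ω₂).length := by
    rw [halg]; exact cs.length_wordProd_le _
  have : ω.length = cs.length w := by rw [hw]; exact hlenω.symm
  rw [hsplit] at this
  simp only [List.length_append, List.length_cons] at this hle
  omega

theorem collision {x y t : W} (ht : t * t = 1)
    (hadd : cs.length (x * y) = cs.length x + cs.length y)
    (h1 : cs.length (x * t) < cs.length x) (h2 : cs.length (t * y) < cs.length y) : False := by
  have hxy : x * y = (x * t) * (t * y) := by
    rw [← mul_assoc, mul_assoc x t t, ht, mul_one]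
  have := cs.length_mul_le (x * t) (t * y)
  rw [← hxy] at this
  omega

/-! ### The key lemma on root pairings -/

theorem len_left (u : W) (c : V) :
    IsPos (rho G cs u⁻¹ (al c)) ↔ cs.length u < cs.length (cs.simple c * u) := by
  rw [← pos_iff]
  have h1 : cs.length (u⁻¹ * cs.simple c) = cs.length (cs.simple c * u) := by
    rw [← cs.length_inv (u⁻¹ * cs.simple c), mul_inv_rev, inv_inv, cs.inv_simple]
  rw [h1, cs.length_inv]

theorem sig_inv_eq (u : W) (s c : V) :
    sig G s (rho G cs u⁻¹ (al c)) = rho G cs ((u * cs.simple s)⁻¹) (al c) := by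
  rw [mul_inv_rev, cs.inv_simple, rho_mul_apply, rho_simple]

theorem form_pair (g : W) (c x : V) :
    formL G (al c) (rho G cs g (al x)) = formL G (rho G cs g⁻¹ (al c)) (al x) := by
  conv_lhs => rw [show (al c : V →₀ ℤ) = rho G cs g (rho G cs g⁻¹ (al c)) by
    rw [← rho_mul_apply, mul_inv_cancel, map_one]; rfl]
  rw [form_inv]

theorem key4 (n : ℕ) : ∀ (u : W), cs.length u = n → ∀ (c s : V),
    IsPos (rho G cs u⁻¹ (al c)) → IsPos (rho G cs u (al s)) →
    IsPos (sig G s (rho G cs u⁻¹ (al c))) →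
    formL G (al c) (rho G cs u (al s)) ≤ 0 := by
  induction n using Nat.strong_induction_on with
  | _ n IH =>
  intro u hn c s hc hs hcs
  subst hn
  by_cases hu : u = 1
  · subst hu
    simp only [inv_one, map_one, Module.End.one_apply] at hcs ⊢
    by_cases hcs' : c = s
    · subst hcs'
      rw [sig_al_self] at hcs
      exact absurd hcs (fun h => pos_neg_false (pos_al c) h)
    · rw [formL_al_al]
      exact kap_nonpos G hcs'
  · obtain ⟨k, hk⟩ := cs.exists_rightDescent_of_ne_one hu
    have hkdown : cs.length (u * cs.simple k) < cs.length u := hk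
    have hup : cs.length u < cs.length (u * cs.simple s) := (pos_iff G cs u s).mpr hs
    have hks : k ≠ s := by rintro rfl; omega
    have hdownlen : cs.length (u * cs.simple k) + 1 = cs.length u := by
      rcases cs.length_mul_simple u k with h | h
      · omega
      · exact h
    have hsc : cs.length (cs.simple c * u) = cs.length u + 1 := by
      have h0 := (len_left G cs u c).mp hc
      rcases cs.length_simple_mul u c with h | h
      · exact h
      · omega
    have hscs : cs.length (cs.simple c * (u * cs.simple s)) = cs.length (u * cs.simple s) + 1 := by
      have h0 : IsPos (rho G cs ((u * cs.simple s)⁻¹) (al c)) := by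
        rw [← sig_inv_eq]; exact hcs
      have h1 := (len_left G cs (u * cs.simple s) c).mp h0
      rcases cs.length_simple_mul (u * cs.simple s) c with h | h
      · exact h
      · omega
    by_cases hadj : G.Adj k s
    · -- adjacent: strip k
      have hcomm : cs.simple k * cs.simple s = cs.simple s * cs.simple k :=
        (RACG.simple_commute_of_adj cs hadj).eq
      set u' := u * cs.simple k with hu'
      have hswap : u' * cs.simple s = (u * cs.simple s) * cs.simple k := by
        rw [hu', mul_assoc, hcomm, ← mul_assoc]
      -- length of s_c * u'
      have hscu' : cs.length u' < cs.length (cs.simple c * u') := by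
        have e1 : cs.simple c * u' = (cs.simple c * u) * cs.simple k := by
          rw [hu', mul_assoc]
        rcases cs.length_mul_simple (cs.simple c * u) k with h | h <;>
          · rw [e1]; omega
      -- rho u' (al s) = rho u (al s)
      have hfix : rho G cs u' (al s) = rho G cs u (al s) := by
        rw [hu', rho_simple_apply, sig_al_adj G hadj]
      -- length of u' * s_s
      have hu's : cs.length (u' * cs.simple s) = cs.length u := by
        have d1 := cs.length_mul_simple u' s
        have d2 := cs.length_mul_simple (u * cs.simple s) k
        rw [hswap]
        rw [hswap] at d1
        have hus : cs.length (u * cs.simple s) = cs.length u + 1 := by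
          rcases cs.length_mul_simple u s with h | h
          · exact h
          · omega
        omega
      have hscu's : cs.length (u' * cs.simple s) < cs.length (cs.simple c * (u' * cs.simple s)) := by
        have e1 : cs.simple c * (u' * cs.simple s) = (cs.simple c * (u * cs.simple s)) * cs.simple k := by
          rw [hswap]; group
        rcases cs.length_mul_simple (cs.simple c * (u * cs.simple s)) k with h | h <;>
          · rw [e1, hu's]; omega
      have hq := IH (cs.length u') (by omega) u' rfl c s
        ((len_left G cs u' c).mpr hscu')
        (by rw [hfix]; exact hs)
        (by rw [sig_inv_eq]; exact (len_left G cs (u' * cs.simple s) c).mpr hscu's)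
      rw [hfix] at hq
      exact hq
    · -- walk case
      have hsk : s ≠ k := Ne.symm hks
      have hadj' : ¬G.Adj s k := fun h => hadj h.symm
      obtain ⟨v, y, t, A, B, C, D, hvw, hvlen, hy, hvs, hvk, hFs, _, hA, hB, hC, hD, hyi, hyj⟩ :=
        walk G cs (cs.length u) u rfl s k hsk hadj' hkdown hup
      simp only [List.length_cons] at hvlen
      -- (I): length of s_c * v
      have hIv : cs.length v < cs.length (cs.simple c * v) := by
        have e1 : cs.simple c * v = (cs.simple c * u) * (cs.wordProd (y :: t))⁻¹ := by
          rw [hvw]; group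
        have e2 := cs.length_mul_ge_length_sub_length (cs.simple c * u) ((cs.wordProd (y :: t))⁻¹)
        rw [← e1] at e2
        have e3 : cs.length ((cs.wordProd (y :: t))⁻¹) ≤ (y :: t).length := by
          rw [cs.length_inv]; exact cs.length_wordProd_le _
        simp only [List.length_cons] at e3
        omega
      -- (III): the last walk letter y is always "good"
      have hIII : cs.length (v * cs.simple y) < cs.length (cs.simple c * (v * cs.simple y)) := by
        have e0 : u = (v * cs.simple y) * cs.wordProd t := by
          rw [hvw, cs.wordProd_cons, mul_assoc]
        have e1 : cs.simple c * (v * cs.simple y) = (cs.simple c * u) * (cs.wordProd t)⁻¹ := by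
          rw [e0]; group
        have e2 := cs.length_mul_ge_length_sub_length (cs.simple c * u) ((cs.wordProd t)⁻¹)
        rw [← e1] at e2
        have e3 : cs.length ((cs.wordProd t)⁻¹) ≤ t.length := by
          rw [cs.length_inv]; exact cs.length_wordProd_le _
        have e4 : cs.length (v * cs.simple y) = cs.length v + 1 := by
          have hvy : cs.length v < cs.length (v * cs.simple y) := by
            rcases hy with h | h
            · rw [h]; exact hvs
            · rw [h]; exact hvk
          rcases cs.length_mul_simple v y with h | h
          · exact h
          · omega
        omega
      have hlv : cs.length v < cs.length u := by omega
      have hposv : IsPos (rho G cs v⁻¹ (al c)) := (len_left G cs v c).mpr hIv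
      -- good case helper
      have hgood : ∀ x : V, cs.length v < cs.length (v * cs.simple x) →
          cs.length (v * cs.simple x) < cs.length (cs.simple c * (v * cs.simple x)) →
          formL G (al c) (rho G cs v (al x)) ≤ 0 := by
        intro x h1 h2
        exact IH (cs.length v) hlv v rfl c x hposv ((pos_iff G cs v x).mp h1)
          (by rw [sig_inv_eq]; exact (len_left G cs (v * cs.simple x) c).mpr h2)
      -- bad case helper
      have hbad : ∀ x : V, ¬(cs.length (v * cs.simple x) < cs.length (cs.simple c * (v * cs.simple x))) →
          rho G cs v⁻¹ (al c) = al x := by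
        intro x h2
        have h3 : cs.length (cs.simple c * (v * cs.simple x)) < cs.length (v * cs.simple x) :=
          lt_of_le_of_ne (not_lt.mp h2) (cs.length_simple_mul_ne (v * cs.simple x) c)
        have h4 : ¬(cs.length (v * cs.simple x) < cs.length (cs.simple c * (v * cs.simple x))) := by omega
        have h5 : ¬ IsPos (rho G cs ((v * cs.simple x)⁻¹) (al c)) := by
          rw [len_left]; exact h4
        have h6 : IsPos (-(rho G cs ((v * cs.simple x)⁻¹) (al c))) := by
          rcases root_dichotomy G cs (⟨(v * cs.simple x)⁻¹, c, rfl⟩ :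
            IsRoot G cs (rho G cs ((v * cs.simple x)⁻¹) (al c))) with h | h
          · exact absurd h h5
          · exact h
        rw [← sig_inv_eq] at h6
        exact pos_flip G cs hposv ⟨v⁻¹, c, rfl⟩ h6
      -- expand q
      have hq : formL G (al c) (rho G cs u (al s))
          = A * formL G (al c) (rho G cs v (al s)) + B * formL G (al c) (rho G cs v (al k)) := by
        rw [hFs, map_add, map_smul, map_smul, smul_eq_mul, smul_eq_mul]
      rw [hq]
      by_cases hgs : cs.length (v * cs.simple s) < cs.length (cs.simple c * (v * cs.simple s))
      · have hqs := hgood s hvs hgs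
        by_cases hgk : cs.length (v * cs.simple k) < cs.length (cs.simple c * (v * cs.simple k))
        · have hqk := hgood k hvk hgk
          nlinarith
        · -- bad at k, so y = s
          have hδ := hbad k hgk
          have hys : y = s := by
            rcases hy with rfl | rfl
            · rfl
            · exact absurd hIII hgk
          have hAB : A = B + 1 := hyi hys
          have hqs' : formL G (al c) (rho G cs v (al s)) = kap G k s := by
            rw [form_pair, hδ, formL_al_al]
          have hqk' : formL G (al c) (rho G cs v (al k)) = 1 := by
            rw [form_pair, hδ, formL_al_al, kap_self]
          rw [hqs', hqk', kap_nonadj G hks (fun h => hadj h)]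
          omega
      · -- bad at s, so y = k
        have hδ := hbad s hgs
        have hyk : y = k := by
          rcases hy with rfl | rfl
          · exact absurd hIII hgs
          · rfl
        have hBA : B = A + 1 := hyj hyk
        have hqs' : formL G (al c) (rho G cs v (al s)) = 1 := by
          rw [form_pair, hδ, formL_al_al, kap_self]
        have hqk' : formL G (al c) (rho G cs v (al k)) = kap G s k := by
          rw [form_pair, hδ, formL_al_al]
        rw [hqs', hqk', kap_nonadj G hsk hadj']
        omega

/-! ### Clique word lemmas -/

theorem cliqueWord_eq (C : Finset V) (h : (C : Set V).Pairwise G.Adj) :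
    RACG.cliqueWord cs C = C.noncommProd (fun x => cs.simple x)
      (fun _ ha _ hb hab => RACG.simple_commute_of_adj cs (h ha hb hab)) := dif_pos h

theorem pairwise_of_insert {a : V} {C : Finset V} (h : ((insert a C : Finset V) : Set V).Pairwise G.Adj) :
    (C : Set V).Pairwise G.Adj := by
  apply h.mono
  intro x hx
  simp only [Finset.coe_insert, Set.mem_insert_iff]
  right
  exact_mod_cast hx

theorem cliqueWord_insert {a : V} {C : Finset V} (ha : a ∉ C)
    (h : ((insert a C : Finset V) : Set V).Pairwise G.Adj) :
    RACG.cliqueWord cs (insert a C) = cs.simple a * RACG.cliqueWord cs C := by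
  rw [cliqueWord_eq G cs _ h, cliqueWord_eq G cs _ (pairwise_of_insert G h)]
  exact Finset.noncommProd_insert_of_notMem C a _ _ ha

theorem clique_adj_of_mem {a c : V} {C : Finset V} (ha : a ∉ C) (hc : c ∈ C)
    (h : ((insert a C : Finset V) : Set V).Pairwise G.Adj) : G.Adj a c := by
  refine h ?_ ?_ ?_
  · simp
  · simp [hc]
  · rintro rfl; exact ha hc

theorem rho_clique (C : Finset V) (h : (C : Set V).Pairwise G.Adj) (x : V →₀ ℤ) :
    rho G cs (RACG.cliqueWord cs C) x
      = x - ∑ c ∈ C, (2 * formL G (al c) x) • al c := by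
  induction C using Finset.induction_on with
  | empty =>
      rw [cliqueWord_eq G cs _ h]; erw [Finset.noncommProd_empty, map_one]
      simp
  | @insert a C' ha ih =>
      rw [cliqueWord_insert G cs ha h, map_mul, Module.End.mul_apply,
        ih (pairwise_of_insert G h), rho_simple]
      rw [map_sub, map_sum]
      have hfix : ∀ c ∈ C', sig G a ((2 * formL G (al c) x) • al c)
          = (2 * formL G (al c) x) • al c := by
        intro c hc
        rw [map_smul, sig_al_adj G (clique_adj_of_mem G ha hc h)]
      rw [Finset.sum_congr rfl hfix, Finset.sum_insert ha, sig_apply]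
      abel

theorem clique_comm (C : Finset V) (h : (C : Set V).Pairwise G.Adj) {c : V} (hc : c ∈ C) :
    Commute (cs.simple c) (RACG.cliqueWord cs C) := by
  rw [cliqueWord_eq G cs _ h]
  apply Finset.noncommProd_commute
  intro x hx
  by_cases hxc : x = c
  · subst hxc; rfl
  · exact RACG.simple_commute_of_adj cs (h hc hx (fun e => hxc e.symm))

theorem clique_sq (C : Finset V) (h : (C : Set V).Pairwise G.Adj) :
    RACG.cliqueWord cs C * RACG.cliqueWord cs C = 1 := by
  induction C using Finset.induction_on with
  | empty => rw [cliqueWord_eq G cs _ h]; erw [Finset.noncommProd_empty, mul_one]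
  | @insert a C' ha ih =>
      have h' := pairwise_of_insert G h
      rw [cliqueWord_insert G cs ha h]
      have hcomm : RACG.cliqueWord cs C' * cs.simple a = cs.simple a * RACG.cliqueWord cs C' := by
        by_cases haC : a ∈ C'
        · exact absurd haC ha
        · -- a commutes with every element of C'
          have : Commute (cs.simple a) (RACG.cliqueWord cs C') := by
            rw [cliqueWord_eq G cs _ h']
            apply Finset.noncommProd_commute
            intro x hx
            exact RACG.simple_commute_of_adj cs (clique_adj_of_mem G ha hx h)
          exact this.symm.eq
      calc cs.simple a * RACG.cliqueWord cs C' * (cs.simple a * RACG.cliqueWord cs C')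
          = cs.simple a * (RACG.cliqueWord cs C' * cs.simple a) * RACG.cliqueWord cs C' := by group
        _ = cs.simple a * (cs.simple a * RACG.cliqueWord cs C') * RACG.cliqueWord cs C' := by
              rw [hcomm]
        _ = (cs.simple a * cs.simple a) * (RACG.cliqueWord cs C' * RACG.cliqueWord cs C') := by
              group
        _ = 1 := by rw [cs.simple_mul_simple_self, ih h', one_mul]

theorem clique_inv (C : Finset V) (h : (C : Set V).Pairwise G.Adj) :
    (RACG.cliqueWord cs C)⁻¹ = RACG.cliqueWord cs C :=
  inv_eq_of_mul_eq_one_right (clique_sq G cs C h)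

theorem clique_al (C : Finset V) (h : (C : Set V).Pairwise G.Adj) {c : V} (hc : c ∈ C) :
    rho G cs (RACG.cliqueWord cs C) (al c) = -al c := by
  rw [rho_clique G cs C h]
  have : ∑ c' ∈ C, (2 * formL G (al c') (al c)) • al c' = (2 : ℤ) • al c := by
    rw [Finset.sum_eq_single c]
    · rw [formL_al_al, kap_self, mul_one]
    · intro b hb hbc
      rw [formL_al_al, kap_adj G (h hb hc hbc), mul_zero, zero_smul]
    · intro hcc; exact absurd hc hcc
  rw [this]
  module

theorem clique_descent (C : Finset V) (h : (C : Set V).Pairwise G.Adj) {c : V} (hc : c ∈ C) :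
    cs.length (RACG.cliqueWord cs C * cs.simple c) + 1 = cs.length (RACG.cliqueWord cs C) := by
  have hneg : IsPos (-(rho G cs (RACG.cliqueWord cs C) (al c))) := by
    rw [clique_al G cs C h hc, neg_neg]
    exact pos_al c
  have := (neg_iff G cs (RACG.cliqueWord cs C) c).mpr hneg
  rcases cs.length_mul_simple (RACG.cliqueWord cs C) c with h' | h'
  · omega
  · exact h'

theorem formL_self_of_support_clique (C : Finset V) (h : (C : Set V).Pairwise G.Adj)
    (x : V →₀ ℤ) (hsupp : ↑x.support ⊆ (C : Set V)) :
    formL G x x = ∑ a ∈ x.support, (x a) * (x a) := by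
  have happly : formL G x x = ∑ a ∈ x.support, x a * ∑ b ∈ x.support, x b * kap G a b := by
    simp only [formL, Finsupp.lsum_apply, Finsupp.sum, LinearMap.toSpanSingleton_apply,
      smul_eq_mul, LinearMap.sum_apply, LinearMap.smul_apply]
  rw [happly]
  apply Finset.sum_congr rfl
  intro a haa
  congr 1
  rw [Finset.sum_eq_single a]
  · rw [kap_self, mul_one]
  · intro b hb hba
    rw [kap_adj G (h (hsupp haa) (hsupp hb) (fun e => hba e.symm)), mul_zero]
  · intro haa'; exact absurd haa haa'

theorem clique_flip (C : Finset V) (h : (C : Set V).Pairwise G.Adj) {x : V →₀ ℤ}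
    (hr : IsRoot G cs x) (hp : IsPos x)
    (hn : IsPos (-(rho G cs (RACG.cliqueWord cs C) x))) : ∃ c ∈ C, x = al c := by
  have hsum := rho_clique G cs C h x
  have hcoord : ∀ b, b ∉ C → x b = 0 := by
    intro b hb
    have h1 := hp.1 b
    have h2 := hn.1 b
    rw [hsum] at h2
    simp only [Finsupp.coe_neg, Pi.neg_apply, Finsupp.sub_apply] at h2
    have hz : (∑ c ∈ C, (2 * formL G (al c) x) • al c) b = 0 := by
      rw [Finsupp.finset_sum_apply]
      apply Finset.sum_eq_zero
      intro c hc
      simp only [Finsupp.smul_apply, smul_eq_mul, al, Finsupp.single_apply]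
      rw [if_neg (fun e : c = b => hb (e ▸ hc)), mul_zero]
    rw [hz] at h2
    omega
  have hsupp : ↑x.support ⊆ (C : Set V) := by
    intro b hb
    simp only [Finset.mem_coe, Finsupp.mem_support_iff] at hb
    by_contra hbC
    exact hb (hcoord b (by exact_mod_cast hbC))
  have hnorm : formL G x x = 1 := root_norm G cs hr
  rw [formL_self_of_support_clique G C h x hsupp] at hnorm
  have hterm : ∀ a ∈ x.support, 1 ≤ (x a) * (x a) := by
    intro a ha
    have h1 := hp.1 a
    have h2 : x a ≠ 0 := Finsupp.mem_support_iff.mp ha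
    have h3 : 1 ≤ x a := by omega
    nlinarith
  have hcard : x.support.card ≤ 1 := by
    by_contra hc
    have : 2 ≤ x.support.card := by omega
    have := Finset.card_nsmul_le_sum x.support (fun a => (x a) * (x a)) 1 (by
      intro a ha; simpa using hterm a ha)
    simp only [nsmul_eq_mul, mul_one] at this
    omega
  have hne : x.support.Nonempty := by
    obtain ⟨b, hb⟩ := hp.2
    exact ⟨b, Finsupp.mem_support_iff.mpr (by omega)⟩
  have hcard1 : x.support.card = 1 := by
    have := Finset.card_pos.mpr hne
    omega
  obtain ⟨a, hsing⟩ := Finset.card_eq_one.mp hcard1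
  have hxa : x = Finsupp.single a (x a) := (Finsupp.support_eq_singleton.mp hsing).2
  have haC : a ∈ C := by
    have : a ∈ (C : Set V) := hsupp (by rw [hsing]; simp)
    exact_mod_cast this
  have hxa1 : x a = 1 := by
    rw [hsing] at hnorm
    simp only [Finset.sum_singleton] at hnorm
    have h1 := hp.1 a
    nlinarith
  exact ⟨a, haC, by rw [hxa, hxa1]; rfl⟩

end Rho
end RACGAux

open RACGAux in
set_option maxHeartbeats 1000000 in
theorem rightDescent_of_common_descent_clique_tail
    {V : Type*} [DecidableEq V] (G : SimpleGraph V) [DecidableRel G.Adj]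
    {W : Type*} [Group W] (cs : CoxeterSystem (RACG.racgMatrix G) W)
    (w₁ w₂ w₃ u : W)
    (hclique : RACG.IsCliqueWord cs w₂)
    (h₁ : cs.length (w₁ * w₂ * w₃) = cs.length w₁ + cs.length w₂ + cs.length w₃)
    (h₂ : cs.length (w₁ * w₂ * u) = cs.length w₁ + cs.length w₂ + cs.length u)
    (h₃ : cs.length (w₃⁻¹ * w₂ * u) = cs.length w₃ + cs.length w₂ + cs.length u)
    (v : V)
    (hd₁ : cs.IsRightDescent (w₁ * w₂ * u) v)
    (hd₂ : cs.IsRightDescent (w₃⁻¹ * w₂ * u) v) :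
    cs.IsRightDescent (w₂ * u) v := by
  obtain ⟨C, hC, hw2⟩ := hclique
  -- basic clique facts
  have hsq : w₂ * w₂ = 1 := by rw [hw2]; exact clique_sq G cs C hC
  have hinv : w₂⁻¹ = w₂ := inv_eq_of_mul_eq_one_right hsq
  have hdes : ∀ c ∈ C, cs.length (w₂ * cs.simple c) + 1 = cs.length w₂ := by
    intro c hc; rw [hw2]; exact clique_descent G cs C hC hc
  have hcommc : ∀ c ∈ C, cs.simple c * w₂ = w₂ * cs.simple c := by
    intro c hc; rw [hw2]; exact (clique_comm G cs C hC hc).eq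
  -- by contradiction
  by_contra hgoal
  have hgoal' : cs.length (w₂ * u) < cs.length (w₂ * u * cs.simple v) := by
    have hne := cs.length_mul_simple_ne (w₂ * u) v
    have : ¬ cs.length (w₂ * u * cs.simple v) < cs.length (w₂ * u) := hgoal
    omega
  have hng : cs.length (w₂ * u * cs.simple v) = cs.length (w₂ * u) + 1 := by
    rcases cs.length_mul_simple (w₂ * u) v with h | h
    · exact h
    · omega
  -- length bookkeeping
  have hinv3 : cs.length w₃⁻¹ = cs.length w₃ := cs.length_inv w₃
  have a1 := cs.length_mul_le (w₁ * w₂) u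
  have a2 := cs.length_mul_le w₁ w₂
  have hw12 : cs.length (w₁ * w₂) = cs.length w₁ + cs.length w₂ := by omega
  have hassoc1 : w₁ * w₂ * u = w₁ * (w₂ * u) := mul_assoc _ _ _
  have a3 : cs.length (w₁ * (w₂ * u)) ≤ cs.length w₁ + cs.length (w₂ * u) :=
    cs.length_mul_le w₁ (w₂ * u)
  have a4 := cs.length_mul_le w₂ u
  have hw2u : cs.length (w₂ * u) = cs.length w₂ + cs.length u := by
    rw [hassoc1] at h₂; omega
  have b1 := cs.length_mul_le (w₃⁻¹ * w₂) u
  have b2 := cs.length_mul_le w₃⁻¹ w₂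
  have hw32 : cs.length (w₃⁻¹ * w₂) = cs.length w₃ + cs.length w₂ := by omega
  -- peels
  have p1 : ∀ c ∈ C, cs.length w₁ < cs.length (w₁ * cs.simple c) := by
    intro c hc
    have e : (w₁ * w₂) * (w₂ * cs.simple c) = w₁ * cs.simple c := by
      rw [show (w₁ * w₂) * (w₂ * cs.simple c) = w₁ * (w₂ * w₂) * cs.simple c by group,
        hsq, mul_one]
    have bound := cs.length_mul_ge_length_sub_length (w₁ * w₂) (w₂ * cs.simple c)
    rw [e] at bound
    have := hdes c hc
    omega
  have p3 : ∀ c ∈ C, cs.length w₃⁻¹ < cs.length (w₃⁻¹ * cs.simple c) := by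
    intro c hc
    have e : (w₃⁻¹ * w₂) * (w₂ * cs.simple c) = w₃⁻¹ * cs.simple c := by
      rw [show (w₃⁻¹ * w₂) * (w₂ * cs.simple c) = w₃⁻¹ * (w₂ * w₂) * cs.simple c by group,
        hsq, mul_one]
    have bound := cs.length_mul_ge_length_sub_length (w₃⁻¹ * w₂) (w₂ * cs.simple c)
    rw [e] at bound
    have := hdes c hc
    omega
  have hlensc : ∀ c ∈ C, cs.length (cs.simple c * w₂) + 1 = cs.length w₂ := by
    intro c hc
    rw [hcommc c hc]
    exact hdes c hc
  have pu : ∀ c ∈ C, cs.length u < cs.length (cs.simple c * u) := by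
    intro c hc
    have e : (cs.simple c * w₂) * (w₂ * u) = cs.simple c * u := by
      rw [show (cs.simple c * w₂) * (w₂ * u) = cs.simple c * (w₂ * w₂) * u by group,
        hsq, mul_one]
    have bound := cs.length_mul_ge_length_sub_length' (cs.simple c * w₂) (w₂ * u)
    rw [e] at bound
    have := hlensc c hc
    omega
  -- root setup
  have hγ : IsPos (rho G cs (w₂ * u) (al v)) := (pos_iff G cs (w₂ * u) v).mp hgoal'
  have hd₁' : cs.length (w₁ * (w₂ * u) * cs.simple v) < cs.length (w₁ * (w₂ * u)) := by
    rw [← hassoc1]; exact hd₁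
  have hnegA : IsPos (-(rho G cs w₁ (rho G cs (w₂ * u) (al v)))) := by
    have := (neg_iff G cs (w₁ * (w₂ * u)) v).mp hd₁'
    rwa [rho_mul_apply] at this
  have hassoc2 : w₃⁻¹ * w₂ * u = w₃⁻¹ * (w₂ * u) := mul_assoc _ _ _
  have hd₂' : cs.length (w₃⁻¹ * (w₂ * u) * cs.simple v) < cs.length (w₃⁻¹ * (w₂ * u)) := by
    rw [← hassoc2]; exact hd₂
  have hnegB : IsPos (-(rho G cs w₃⁻¹ (rho G cs (w₂ * u) (al v)))) := by
    have := (neg_iff G cs (w₃⁻¹ * (w₂ * u)) v).mp hd₂'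
    rwa [rho_mul_apply] at this
  have hγeq : rho G cs (w₂ * u) (al v) = rho G cs w₂ (rho G cs u (al v)) :=
    rho_mul_apply G cs w₂ u (al v)
  rcases root_dichotomy G cs (⟨u, v, rfl⟩ : IsRoot G cs (rho G cs u (al v))) with hγ₀ | hγ₀
  case inr =>
    -- Case A : ℓ(us) < ℓ(u); the root -γ₀ is positive and flipped by the clique word
    have hxroot : IsRoot G cs (-(rho G cs u (al v))) :=
      ⟨u * cs.simple v, v, by rw [rho_simple_apply, sig_al_self, map_neg]⟩
    have hnflip : IsPos (-(rho G cs w₂ (-(rho G cs u (al v))))) := by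
      rw [map_neg, neg_neg, ← hγeq]
      exact hγ
    obtain ⟨c, hc, hxc⟩ := by
      rw [hw2] at hnflip
      exact clique_flip G cs C hC hxroot hγ₀ hnflip
    have hγal : rho G cs (w₂ * u) (al v) = al c := by
      have h0 : rho G cs u (al v) = -(al c) := by
        rw [← neg_neg (rho G cs u (al v)), hxc]
      rw [hγeq, h0, map_neg]
      rw [hw2, clique_al G cs C hC hc, neg_neg]
    rw [hγal] at hnegA
    have := (neg_iff G cs w₁ c).mpr hnegA
    have := p1 c hc
    omega
  case inl =>
    -- Case B : γ₀ positive
    have husv : cs.length (u * cs.simple v) = cs.length u + 1 := by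
      have h0 := (pos_iff G cs u v).mpr hγ₀
      rcases cs.length_mul_simple u v with h | h
      · exact h
      · omega
    have hbig : cs.length (w₂ * (u * cs.simple v)) = cs.length w₂ + cs.length (u * cs.simple v) := by
      rw [← mul_assoc, hng, hw2u, husv]
      omega
    have pus : ∀ c ∈ C, cs.length (u * cs.simple v) < cs.length (cs.simple c * (u * cs.simple v)) := by
      intro c hc
      have e : (cs.simple c * w₂) * (w₂ * (u * cs.simple v)) = cs.simple c * (u * cs.simple v) := by
        rw [show (cs.simple c * w₂) * (w₂ * (u * cs.simple v))
            = cs.simple c * (w₂ * w₂) * (u * cs.simple v) by group, hsq, mul_one]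
      have bound := cs.length_mul_ge_length_sub_length' (cs.simple c * w₂) (w₂ * (u * cs.simple v))
      rw [e] at bound
      have := hlensc c hc
      omega
    -- μ_c ≤ 0 for all c ∈ C
    have hmu : ∀ c ∈ C, formL G (al c) (rho G cs u (al v)) ≤ 0 := by
      intro c hc
      refine key4 G cs (cs.length u) u rfl c v ?_ hγ₀ ?_
      · exact (len_left G cs u c).mpr (pu c hc)
      · rw [sig_inv_eq]
        exact (len_left G cs (u * cs.simple v) c).mpr (pus c hc)
    -- ρ(w₁) γ₀ is positive
    have hA0 : IsPos (rho G cs w₁ (rho G cs u (al v))) := by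
      by_contra hA0n
      have hroot : IsRoot G cs (rho G cs w₁ (rho G cs u (al v))) :=
        ⟨w₁ * u, v, by rw [rho_mul_apply]⟩
      have hnegroot : IsPos (-(rho G cs w₁ (rho G cs u (al v)))) := by
        rcases root_dichotomy G cs hroot with h | h
        · exact absurd h hA0n
        · exact h
      have hnegroot' : IsPos (-(rho G cs (w₁ * u) (al v))) := by
        rwa [rho_mul_apply]
      have crit1 := crit G cs w₁ u v hγ₀ hnegroot'
      have hnegB2 : IsPos (-(rho G cs ((w₃⁻¹ * w₂) * u) (al v))) := by
        rw [mul_assoc, rho_mul_apply]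
        exact hnegB
      have crit2 := crit G cs (w₃⁻¹ * w₂) u v hγ₀ hnegB2
      have ht : (u * cs.simple v * u⁻¹) * (u * cs.simple v * u⁻¹) = 1 := conj_sq G cs u v
      have htinv : (u * cs.simple v * u⁻¹)⁻¹ = u * cs.simple v * u⁻¹ :=
        inv_eq_of_mul_eq_one_right ht
      have hadd : cs.length ((w₃⁻¹ * w₂) * w₁⁻¹)
          = cs.length (w₃⁻¹ * w₂) + cs.length w₁⁻¹ := by
        have e : ((w₃⁻¹ * w₂) * w₁⁻¹)⁻¹ = w₁ * w₂ * w₃ := by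
          rw [mul_inv_rev, mul_inv_rev, inv_inv, inv_inv, hinv, ← mul_assoc]
        have e2 := cs.length_inv ((w₃⁻¹ * w₂) * w₁⁻¹)
        rw [e] at e2
        have e3 := cs.length_inv w₁
        omega
      have h2col : cs.length ((u * cs.simple v * u⁻¹) * w₁⁻¹) < cs.length w₁⁻¹ := by
        have e : ((u * cs.simple v * u⁻¹) * w₁⁻¹)⁻¹ = w₁ * (u * cs.simple v * u⁻¹) := by
          rw [mul_inv_rev, inv_inv, htinv]
        have e2 := cs.length_inv ((u * cs.simple v * u⁻¹) * w₁⁻¹)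
        rw [e] at e2
        have e3 := cs.length_inv w₁
        omega
      exact collision G cs ht hadd crit2 h2col
    -- final contradiction
    have hsum : rho G cs w₂ (rho G cs u (al v))
        = rho G cs u (al v)
          - ∑ c ∈ C, (2 * formL G (al c) (rho G cs u (al v))) • al c := by
      rw [hw2]; exact rho_clique G cs C hC _
    have hγw1 : rho G cs w₁ (rho G cs (w₂ * u) (al v))
        = rho G cs w₁ (rho G cs u (al v))
          - ∑ c ∈ C, (2 * formL G (al c) (rho G cs u (al v))) • rho G cs w₁ (al c) := by
      rw [hγeq, hsum, map_sub, map_sum]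
      congr 1
      exact Finset.sum_congr rfl fun c _ => map_smul _ _ _
    obtain ⟨b, hb⟩ := hA0.2
    have hbneg : (rho G cs w₁ (rho G cs (w₂ * u) (al v))) b ≤ 0 := by
      have := hnegA.1 b
      simp only [Finsupp.coe_neg, Pi.neg_apply] at this
      omega
    have hcoordb : (rho G cs w₁ (rho G cs (w₂ * u) (al v))) b
        = (rho G cs w₁ (rho G cs u (al v))) b
          - ∑ c ∈ C, (2 * formL G (al c) (rho G cs u (al v))) * (rho G cs w₁ (al c)) b := by
      rw [hγw1, Finsupp.sub_apply, Finsupp.finset_sum_apply]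
      congr 1
      all_goals exact Finset.sum_congr rfl fun c _ => by rw [Finsupp.smul_apply, smul_eq_mul]
    have hsumle : ∑ c ∈ C, (2 * formL G (al c) (rho G cs u (al v))) * (rho G cs w₁ (al c)) b ≤ 0 := by
      apply Finset.sum_nonpos
      intro c hc
      have hμ := hmu c hc
      have hcoord : 0 ≤ (rho G cs w₁ (al c)) b :=
        ((pos_iff G cs w₁ c).mp (p1 c hc)).1 b
      nlinarith
    linarith
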